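/- Let z₁,…,zₙ ∈ ℝ^p be nonzero vectors and ρ: (0,∞) → ℝ continuous, nondecreasing, with ρ(eˣ) convex. Then the negative log-likelihood L₀(Σ) = Σᵢ ρ(zᵢᵀΣ⁻¹zᵢ) + (n/2) log det Σ is geodesically convex on S₊₊(p) with respect to the geodesics γ(t) = Σ₁^{1/2}(Σ₁^{-1/2}Σ₂Σ₁^{-1/2})^t Σ₁^{1/2}. -/

import Mathlib

open Matrix

noncomputable def mpow {p : ℕ} (A : Matrix (Fin p) (Fin p) ℝ) (t : ℝ) :
    Matrix (Fin p) (Fin p) ℝ :=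
  if h : A.IsHermitian then
    (h.eigenvectorUnitary : Matrix (Fin p) (Fin p) ℝ) *
      Matrix.diagonal (fun i => h.eigenvalues i ^ t) *
      (star (h.eigenvectorUnitary : Matrix (Fin p) (Fin p) ℝ))
  else A

/-- The geodesic `γ(t) = S1^{1/2} (S1^{-1/2} S2 S1^{-1/2})^t S1^{1/2}` on `S₊₊(p)`. -/
noncomputable def geo {p : ℕ} (A B : Matrix (Fin p) (Fin p) ℝ) (t : ℝ) :
    Matrix (Fin p) (Fin p) ℝ :=
  mpow A (1/2) * mpow (mpow A (-(1/2)) * B * mpow A (-(1/2))) t * mpow A (1/2)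

section Helpers
variable {p : ℕ} {A : Matrix (Fin p) (Fin p) ℝ}

lemma mpow_eq (h : A.IsHermitian) (t : ℝ) :
    mpow A t = (h.eigenvectorUnitary : Matrix (Fin p) (Fin p) ℝ) *
      Matrix.diagonal (fun i => h.eigenvalues i ^ t) *
      (star (h.eigenvectorUnitary : Matrix (Fin p) (Fin p) ℝ)) := dif_pos h

lemma mpow_mul (hA : A.PosDef) (s t : ℝ) : mpow A s * mpow A t = mpow A (s + t) := by
  have h := hA.1
  set V := (h.eigenvectorUnitary : Matrix (Fin p) (Fin p) ℝ) with hV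
  have h1 : star V * V = 1 := Unitary.coe_star_mul_self _
  rw [mpow_eq h, mpow_eq h, mpow_eq h]
  have : ∀ D E : Matrix (Fin p) (Fin p) ℝ,
      V * D * star V * (V * E * star V) = V * (D * E) * star V := by
    intro D E
    calc V * D * star V * (V * E * star V) = V * (D * ((star V * V) * E)) * star V := by
          simp only [mul_assoc]
      _ = V * (D * E) * star V := by rw [h1, one_mul]
  rw [this, diagonal_mul_diagonal]
  have hfun : (fun i => h.eigenvalues i ^ s * h.eigenvalues i ^ t)
      = fun i => h.eigenvalues i ^ (s + t) :=
    funext fun i => (Real.rpow_add (hA.eigenvalues_pos i) s t).symm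
  rw [hfun]

lemma mpow_zero (h : A.IsHermitian) : mpow A 0 = 1 := by
  rw [mpow_eq h]
  simp only [Real.rpow_zero, diagonal_one, mul_one]
  exact Unitary.coe_mul_star_self _

lemma mpow_one (h : A.IsHermitian) : mpow A 1 = A := by
  rw [mpow_eq h]
  simp only [Real.rpow_one]
  simpa using h.spectral_theorem.symm

lemma mpow_isHermitian (h : A.IsHermitian) (t : ℝ) : (mpow A t).IsHermitian := by
  rw [mpow_eq h]
  unfold Matrix.IsHermitian
  simp only [star_eq_conjTranspose, conjTranspose_mul, conjTranspose_conjTranspose,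
    diagonal_conjTranspose]
  simp [mul_assoc, Function.comp]

lemma det_mpow (h : A.IsHermitian) (t : ℝ) :
    (mpow A t).det = ∏ i, h.eigenvalues i ^ t := by
  rw [mpow_eq h, det_mul, det_mul, det_diagonal]
  have h1 : (star (h.eigenvectorUnitary : Matrix (Fin p) (Fin p) ℝ)).det *
      (h.eigenvectorUnitary : Matrix (Fin p) (Fin p) ℝ).det = 1 := by
    rw [← det_mul, Unitary.coe_star_mul_self, det_one]
  calc ((h.eigenvectorUnitary : Matrix (Fin p) (Fin p) ℝ).det * ∏ i, h.eigenvalues i ^ t) *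
      (star (h.eigenvectorUnitary : Matrix (Fin p) (Fin p) ℝ)).det
      = ((star (h.eigenvectorUnitary : Matrix (Fin p) (Fin p) ℝ)).det *
        (h.eigenvectorUnitary : Matrix (Fin p) (Fin p) ℝ).det) * ∏ i, h.eigenvalues i ^ t := by ring
    _ = ∏ i, h.eigenvalues i ^ t := by rw [h1, one_mul]

lemma dot_mpow (h : A.IsHermitian) (t : ℝ) (v : Fin p → ℝ) :
    v ⬝ᵥ mpow A t *ᵥ v = ∑ j, h.eigenvalues j ^ t *
      ((star (h.eigenvectorUnitary : Matrix (Fin p) (Fin p) ℝ) *ᵥ v) j) ^ 2 := by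
  set V := (h.eigenvectorUnitary : Matrix (Fin p) (Fin p) ℝ) with hV
  have hsV : star V = Vᵀ := by
    rw [star_eq_conjTranspose]
    ext i j
    simp [conjTranspose_apply]
  rw [mpow_eq h, ← mulVec_mulVec, ← mulVec_mulVec, dotProduct_mulVec,
    ← mulVec_transpose, ← hsV]
  simp only [dotProduct, mulVec_diagonal]
  exact Finset.sum_congr rfl fun j _ => by ring

lemma dot_conj {B N : Matrix (Fin p) (Fin p) ℝ} (hB : Bᵀ = B) (v : Fin p → ℝ) :
    v ⬝ᵥ (B * N * B) *ᵥ v = (B *ᵥ v) ⬝ᵥ N *ᵥ (B *ᵥ v) := by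
  rw [← mulVec_mulVec, ← mulVec_mulVec, dotProduct_mulVec, ← mulVec_transpose, hB]

lemma posdef_conj {B C : Matrix (Fin p) (Fin p) ℝ} (hC : C.PosDef) (hB : B.IsHermitian)
    (hBu : IsUnit B) : (B * C * B).PosDef := by
  have hBt : Bᵀ = B := by
    ext i j
    have h2 := congrFun (congrFun hB.eq i) j
    simpa [conjTranspose_apply] using h2
  refine PosDef.of_dotProduct_mulVec_pos ?_ ?_
  · have h1 := isHermitian_conjTranspose_mul_mul B hC.1
    rwa [hB.eq] at h1
  · intro x hx
    have hinj := mulVec_injective_iff_isUnit.mpr hBu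
    have hBx : B *ᵥ x ≠ 0 := by
      intro hcon
      exact hx (hinj (by simpa using hcon))
    have := hC.dotProduct_mulVec_pos hBx
    simpa [star_trivial, dot_conj hBt] using this

variable {S1 S2 : Matrix (Fin p) (Fin p) ℝ}

lemma hXB (hS1 : S1.PosDef) : mpow S1 (1/2) * mpow S1 (-(1/2)) = 1 := by
  rw [mpow_mul hS1, show (1/2 + -(1/2) : ℝ) = 0 by norm_num, mpow_zero hS1.1]

lemma hBX (hS1 : S1.PosDef) : mpow S1 (-(1/2)) * mpow S1 (1/2) = 1 := by
  rw [mpow_mul hS1, show (-(1/2) + 1/2 : ℝ) = 0 by norm_num, mpow_zero hS1.1]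

lemma M_posDef (hS1 : S1.PosDef) (hS2 : S2.PosDef) :
    (mpow S1 (-(1/2)) * S2 * mpow S1 (-(1/2))).PosDef :=
  posdef_conj hS2 (mpow_isHermitian hS1.1 _)
    (isUnit_iff_exists.mpr ⟨mpow S1 (1/2), hBX hS1, hXB hS1⟩)

lemma geo_inv (hS1 : S1.PosDef) (hS2 : S2.PosDef) (t : ℝ) :
    (geo S1 S2 t)⁻¹ = mpow S1 (-(1/2)) *
      mpow (mpow S1 (-(1/2)) * S2 * mpow S1 (-(1/2))) (-t) * mpow S1 (-(1/2)) := by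
  have hM := M_posDef hS1 hS2
  apply inv_eq_right_inv
  set Y := mpow (mpow S1 (-(1/2)) * S2 * mpow S1 (-(1/2))) t with hY
  set Y' := mpow (mpow S1 (-(1/2)) * S2 * mpow S1 (-(1/2))) (-t) with hY'
  set X := mpow S1 (1/2) with hX
  set B := mpow S1 (-(1/2)) with hB
  have h1 : X * B = 1 := hXB hS1
  have h2 : Y * Y' = 1 := by
    rw [hY, hY', mpow_mul hM, add_neg_cancel, mpow_zero hM.1]
  show (X * Y * X) * (B * Y' * B) = 1
  calc (X * Y * X) * (B * Y' * B) = X * (Y * ((X * B) * (Y' * B))) := by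
        simp only [mul_assoc]
    _ = X * (Y * (Y' * B)) := by rw [h1, one_mul]
    _ = X * ((Y * Y') * B) := by rw [mul_assoc Y Y' B]
    _ = X * B := by rw [h2, one_mul]
    _ = 1 := h1

lemma geo_zero (hS1 : S1.PosDef) (hS2 : S2.PosDef) : geo S1 S2 0 = S1 := by
  have hM := M_posDef hS1 hS2
  show mpow S1 (1/2) * mpow _ 0 * mpow S1 (1/2) = S1
  rw [mpow_zero hM.1, mul_one, mpow_mul hS1, show (1/2 + 1/2 : ℝ) = 1 by norm_num,
    mpow_one hS1.1]

lemma geo_one (hS1 : S1.PosDef) (hS2 : S2.PosDef) : geo S1 S2 1 = S2 := by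
  have hM := M_posDef hS1 hS2
  show mpow S1 (1/2) * mpow _ 1 * mpow S1 (1/2) = S2
  rw [mpow_one hM.1]
  set X := mpow S1 (1/2) with hX
  set B := mpow S1 (-(1/2)) with hB
  have h1 : X * B = 1 := hXB hS1
  have h2 : B * X = 1 := hBX hS1
  calc X * (B * S2 * B) * X = X * (B * (S2 * (B * X))) := by simp only [mul_assoc]
    _ = X * (B * (S2 * 1)) := by rw [h2]
    _ = (X * B) * S2 := by rw [mul_one, ← mul_assoc]
    _ = S2 := by rw [h1, one_mul]

lemma detM_eq (hS1 : S1.PosDef) (hS2 : S2.PosDef) :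
    (mpow S1 (-(1/2)) * S2 * mpow S1 (-(1/2))).det = S2.det * S1.det⁻¹ := by
  have h1 : mpow S1 (-(1/2)) * mpow S1 (-(1/2)) = mpow S1 (-1) := by
    rw [mpow_mul hS1]; norm_num
  have h2 : S1 * mpow S1 (-1) = 1 := by
    have h3 := mpow_mul hS1 1 (-1)
    rw [mpow_one hS1.1] at h3
    rw [h3, show (1 : ℝ) + (-1) = 0 by norm_num, mpow_zero hS1.1]
  have h4 : S1.det * (mpow S1 (-1)).det = 1 := by rw [← det_mul, h2, det_one]
  have h5 : (mpow S1 (-1)).det = S1.det⁻¹ :=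
    eq_inv_of_mul_eq_one_right h4
  rw [det_mul, det_mul]
  calc (mpow S1 (-(1/2))).det * S2.det * (mpow S1 (-(1/2))).det
      = S2.det * ((mpow S1 (-(1/2))).det * (mpow S1 (-(1/2))).det) := by ring
    _ = S2.det * (mpow S1 (-(1/2)) * mpow S1 (-(1/2))).det := by rw [det_mul]
    _ = S2.det * S1.det⁻¹ := by rw [h1, h5]

lemma logdet_geo (hS1 : S1.PosDef) (hS2 : S2.PosDef) (t : ℝ) :
    Real.log (geo S1 S2 t).det = (1 - t) * Real.log S1.det + t * Real.log S2.det := by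
  have hM := M_posDef hS1 hS2
  have μpos : ∀ i, 0 < hM.1.eigenvalues i := hM.eigenvalues_pos
  have hXX : mpow S1 (1/2) * mpow S1 (1/2) = S1 := by
    rw [mpow_mul hS1, show (1/2 + 1/2 : ℝ) = 1 by norm_num, mpow_one hS1.1]
  have hdet : (geo S1 S2 t).det = S1.det * ∏ i, hM.1.eigenvalues i ^ t := by
    show (mpow S1 (1/2) * mpow _ t * mpow S1 (1/2)).det = _
    rw [det_mul, det_mul, det_mpow hM.1]
    have hd : (mpow S1 (1/2)).det * (mpow S1 (1/2)).det = S1.det := by rw [← det_mul, hXX]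
    calc (mpow S1 (1/2)).det * (∏ i, hM.1.eigenvalues i ^ t) * (mpow S1 (1/2)).det
        = ((mpow S1 (1/2)).det * (mpow S1 (1/2)).det) * ∏ i, hM.1.eigenvalues i ^ t := by ring
      _ = _ := by rw [hd]
  have hprod : (∏ i, hM.1.eigenvalues i) = S2.det * S1.det⁻¹ := by
    have h6 := hM.1.det_eq_prod_eigenvalues
    rw [detM_eq hS1 hS2] at h6
    simpa using h6.symm
  have hlogprod : Real.log (∏ i, hM.1.eigenvalues i ^ t)
      = t * (Real.log S2.det - Real.log S1.det) := by
    rw [Real.log_prod (fun i _ => (Real.rpow_pos_of_pos (μpos i) t).ne')]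
    simp_rw [Real.log_rpow (μpos _)]
    rw [← Finset.mul_sum, ← Real.log_prod (fun i _ => (μpos i).ne'), hprod,
      Real.log_mul hS2.det_pos.ne' (inv_ne_zero hS1.det_pos.ne'), Real.log_inv]
    ring
  have hprodpos : 0 < ∏ i, hM.1.eigenvalues i ^ t :=
    Finset.prod_pos fun i _ => Real.rpow_pos_of_pos (μpos i) t
  rw [hdet, Real.log_mul hS1.det_pos.ne' hprodpos.ne', hlogprod]
  ring

lemma holder_sum {m : ℕ} (c μ : Fin m → ℝ) (hc : ∀ j, 0 ≤ c j) (hμ : ∀ j, 0 < μ j)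
    {t : ℝ} (ht : t ∈ Set.Ioo (0:ℝ) 1)
    (hX : 0 < ∑ j, c j) (hY : 0 < ∑ j, μ j ^ (-1:ℝ) * c j) :
    ∑ j, μ j ^ (-t) * c j ≤ (∑ j, c j) ^ (1-t) * (∑ j, μ j ^ (-1:ℝ) * c j) ^ t := by
  set X := ∑ j, c j with hXdef
  set Y := ∑ j, μ j ^ (-1:ℝ) * c j with hYdef
  have hXa : (0:ℝ) < X ^ (1-t) := Real.rpow_pos_of_pos hX _
  have hYb : (0:ℝ) < Y ^ t := Real.rpow_pos_of_pos hY _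
  have key : ∀ j, μ j ^ (-t) * c j ≤
      ((1-t) * (c j / X) + t * ((μ j ^ (-1:ℝ) * c j) / Y)) * (X ^ (1-t) * Y ^ t) := by
    intro j
    have hd : 0 ≤ μ j ^ (-1:ℝ) * c j :=
      mul_nonneg (Real.rpow_pos_of_pos (hμ j) _).le (hc j)
    have hg := Real.geom_mean_le_arith_mean2_weighted (by linarith [ht.2] : (0:ℝ) ≤ 1-t)
      ht.1.le (div_nonneg (hc j) hX.le) (div_nonneg hd hY.le) (by ring)
    have hLHS : (c j / X) ^ (1-t) * ((μ j ^ (-1:ℝ) * c j) / Y) ^ t * (X ^ (1-t) * Y ^ t)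
        = μ j ^ (-t) * c j := by
      have hc1 : c j ^ (1-t) * c j ^ t = c j := by
        rw [← Real.rpow_add' (hc j) (by intro h; linarith)]
        norm_num
      rw [Real.div_rpow (hc j) hX.le, Real.div_rpow hd hY.le,
        Real.mul_rpow (Real.rpow_pos_of_pos (hμ j) _).le (hc j),
        ← Real.rpow_mul (hμ j).le, neg_one_mul]
      rw [div_mul_div_comm, div_mul_cancel₀ _ (mul_pos hXa hYb).ne']
      linear_combination μ j ^ (-t) * hc1
    calc μ j ^ (-t) * c j
        = (c j / X) ^ (1-t) * ((μ j ^ (-1:ℝ) * c j) / Y) ^ t * (X ^ (1-t) * Y ^ t) :=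
          hLHS.symm
      _ ≤ _ := mul_le_mul_of_nonneg_right hg (mul_pos hXa hYb).le
  calc ∑ j, μ j ^ (-t) * c j
      ≤ ∑ j, ((1-t) * (c j / X) + t * ((μ j ^ (-1:ℝ) * c j) / Y)) * (X ^ (1-t) * Y ^ t) :=
        Finset.sum_le_sum fun j _ => key j
    _ = ((1-t) * (X / X) + t * (Y / Y)) * (X ^ (1-t) * Y ^ t) := by
        rw [← Finset.sum_mul]
        congr 1
        rw [Finset.sum_add_distrib]
        simp only [div_eq_mul_inv, ← Finset.sum_mul, ← Finset.mul_sum]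
        rw [← hXdef, ← hYdef]
    _ = X ^ (1-t) * Y ^ t := by
        rw [div_self hX.ne', div_self hY.ne']; ring

lemma rho_step (ρ : ℝ → ℝ) (hmono : MonotoneOn ρ (Set.Ioi 0))
    (hconv : ConvexOn ℝ Set.univ (fun x : ℝ => ρ (Real.exp x)))
    {m : ℕ} (c μ : Fin m → ℝ) (hc : ∀ j, 0 ≤ c j) (hμ : ∀ j, 0 < μ j)
    {t : ℝ} (ht : t ∈ Set.Ioo (0:ℝ) 1)
    (hX : 0 < ∑ j, c j) (hY : 0 < ∑ j, μ j ^ (-1:ℝ) * c j) :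
    ρ (∑ j, μ j ^ (-t) * c j) ≤
      (1-t) * ρ (∑ j, c j) + t * ρ (∑ j, μ j ^ (-1:ℝ) * c j) := by
  set X := ∑ j, c j with hXdef
  set Y := ∑ j, μ j ^ (-1:ℝ) * c j with hYdef
  have hex : ∃ j, 0 < c j := by
    by_contra h
    push_neg at h
    have : X ≤ 0 := Finset.sum_nonpos fun j _ => h j
    linarith
  obtain ⟨j0, hj0⟩ := hex
  have hQpos : 0 < ∑ j, μ j ^ (-t) * c j :=
    Finset.sum_pos' (fun j _ => mul_nonneg (Real.rpow_pos_of_pos (hμ j) _).le (hc j))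
      ⟨j0, Finset.mem_univ _, mul_pos (Real.rpow_pos_of_pos (hμ j0) _) hj0⟩
  have hP : 0 < X ^ (1-t) * Y ^ t :=
    mul_pos (Real.rpow_pos_of_pos hX _) (Real.rpow_pos_of_pos hY _)
  have h1 : ρ (∑ j, μ j ^ (-t) * c j) ≤ ρ (X ^ (1-t) * Y ^ t) :=
    hmono (Set.mem_Ioi.mpr hQpos) (Set.mem_Ioi.mpr hP) (holder_sum c μ hc hμ ht hX hY)
  have h2 : X ^ (1-t) * Y ^ t
      = Real.exp ((1-t) * Real.log X + t * Real.log Y) := by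
    rw [Real.rpow_def_of_pos hX, Real.rpow_def_of_pos hY, ← Real.exp_add]
    congr 1
    ring
  have h3 := hconv.2 (Set.mem_univ (Real.log X)) (Set.mem_univ (Real.log Y))
    (by linarith [ht.2] : (0:ℝ) ≤ 1-t) ht.1.le (by ring)
  simp only [smul_eq_mul, Real.exp_log hX, Real.exp_log hY] at h3
  calc ρ (∑ j, μ j ^ (-t) * c j) ≤ ρ (X ^ (1-t) * Y ^ t) := h1
    _ = ρ (Real.exp ((1-t) * Real.log X + t * Real.log Y)) := by rw [h2]
    _ ≤ (1-t) * ρ X + t * ρ Y := h3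

lemma herm_transpose {B : Matrix (Fin p) (Fin p) ℝ} (hB : B.IsHermitian) : Bᵀ = B := by
  ext i j
  have h2 := congrFun (congrFun hB.eq i) j
  simpa [conjTranspose_apply] using h2

end Helpers

theorem L0_geodesically_convex {p n : ℕ} (z : Fin n → Fin p → ℝ)
    (hz : ∀ i, z i ≠ 0) (ρ : ℝ → ℝ)
    (hcont : ContinuousOn ρ (Set.Ioi 0))
    (hmono : MonotoneOn ρ (Set.Ioi 0))
    (hconv : ConvexOn ℝ Set.univ (fun x : ℝ => ρ (Real.exp x))) :
    ∀ (S1 S2 : Matrix (Fin p) (Fin p) ℝ), S1.PosDef → S2.PosDef →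
      ∀ t ∈ Set.Ioo (0:ℝ) 1,
        (∑ i, ρ (z i ⬝ᵥ (geo S1 S2 t)⁻¹ *ᵥ z i)
            + (n / 2 : ℝ) * Real.log (geo S1 S2 t).det) ≤
          (1 - t) * (∑ i, ρ (z i ⬝ᵥ S1⁻¹ *ᵥ z i) + (n / 2 : ℝ) * Real.log S1.det)
            + t * (∑ i, ρ (z i ⬝ᵥ S2⁻¹ *ᵥ z i) + (n / 2 : ℝ) * Real.log S2.det) := by
  intro S1 S2 hS1 hS2 t ht
  have hM := M_posDef hS1 hS2
  set c : Fin n → Fin p → ℝ := fun i j =>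
    ((star (hM.1.eigenvectorUnitary : Matrix (Fin p) (Fin p) ℝ) *ᵥ
      (mpow S1 (-(1/2)) *ᵥ z i)) j) ^ 2 with hcdef
  have hkey : ∀ (i : Fin n) (s : ℝ),
      z i ⬝ᵥ (mpow S1 (-(1/2)) *
        mpow (mpow S1 (-(1/2)) * S2 * mpow S1 (-(1/2))) s * mpow S1 (-(1/2))) *ᵥ z i
      = ∑ j, hM.1.eigenvalues j ^ s * c i j := by
    intro i s
    rw [dot_conj (herm_transpose (mpow_isHermitian hS1.1 _)), dot_mpow hM.1]
  have hS1inv : S1⁻¹ = mpow S1 (-(1/2)) *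
      mpow (mpow S1 (-(1/2)) * S2 * mpow S1 (-(1/2))) 0 * mpow S1 (-(1/2)) := by
    conv_lhs => rw [← geo_zero hS1 hS2]
    rw [geo_inv hS1 hS2 0, neg_zero]
  have hS2inv : S2⁻¹ = mpow S1 (-(1/2)) *
      mpow (mpow S1 (-(1/2)) * S2 * mpow S1 (-(1/2))) (-1) * mpow S1 (-(1/2)) := by
    conv_lhs => rw [← geo_one hS1 hS2]
    rw [geo_inv hS1 hS2 1]
  have hQ : ∀ i, z i ⬝ᵥ (geo S1 S2 t)⁻¹ *ᵥ z i
      = ∑ j, hM.1.eigenvalues j ^ (-t) * c i j := fun i => by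
    rw [geo_inv hS1 hS2 t]; exact hkey i (-t)
  have hXi : ∀ i, z i ⬝ᵥ S1⁻¹ *ᵥ z i = ∑ j, c i j := fun i => by
    rw [hS1inv, hkey i 0]
    simp [Real.rpow_zero]
  have hYi : ∀ i, z i ⬝ᵥ S2⁻¹ *ᵥ z i
      = ∑ j, hM.1.eigenvalues j ^ (-1:ℝ) * c i j := fun i => by
    rw [hS2inv]; exact hkey i (-1)
  have hXpos : ∀ i, 0 < ∑ j, c i j := fun i => by
    rw [← hXi]
    have := (hS1.inv).dotProduct_mulVec_pos (hz i)
    simpa using this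
  have hYpos : ∀ i, 0 < ∑ j, hM.1.eigenvalues j ^ (-1:ℝ) * c i j := fun i => by
    rw [← hYi]
    have := (hS2.inv).dotProduct_mulVec_pos (hz i)
    simpa using this
  have hsum : ∑ i, ρ (z i ⬝ᵥ (geo S1 S2 t)⁻¹ *ᵥ z i)
      ≤ (1-t) * (∑ i, ρ (z i ⬝ᵥ S1⁻¹ *ᵥ z i)) + t * (∑ i, ρ (z i ⬝ᵥ S2⁻¹ *ᵥ z i)) := by
    calc ∑ i, ρ (z i ⬝ᵥ (geo S1 S2 t)⁻¹ *ᵥ z i)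
        ≤ ∑ i, ((1-t) * ρ (z i ⬝ᵥ S1⁻¹ *ᵥ z i) + t * ρ (z i ⬝ᵥ S2⁻¹ *ᵥ z i)) := by
          refine Finset.sum_le_sum fun i _ => ?_
          rw [hQ i, hXi i, hYi i]
          exact rho_step ρ hmono hconv (c i) hM.1.eigenvalues
            (fun j => sq_nonneg _) hM.eigenvalues_pos ht (hXpos i) (hYpos i)
      _ = _ := by rw [Finset.sum_add_distrib, ← Finset.mul_sum, ← Finset.mul_sum]
  have hdet := logdet_geo hS1 hS2 t
  calc ∑ i, ρ (z i ⬝ᵥ (geo S1 S2 t)⁻¹ *ᵥ z i) + (n / 2 : ℝ) * Real.log (geo S1 S2 t).det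
      = ∑ i, ρ (z i ⬝ᵥ (geo S1 S2 t)⁻¹ *ᵥ z i)
        + (n / 2 : ℝ) * ((1 - t) * Real.log S1.det + t * Real.log S2.det) := by rw [hdet]
    _ ≤ ((1-t) * (∑ i, ρ (z i ⬝ᵥ S1⁻¹ *ᵥ z i)) + t * (∑ i, ρ (z i ⬝ᵥ S2⁻¹ *ᵥ z i)))
        + (n / 2 : ℝ) * ((1 - t) * Real.log S1.det + t * Real.log S2.det) := by
          linarith [hsum]
    _ = _ := by ring
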